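/- Let E be a one-variable word equation with finite solution set {[x0], ..., [xm]} where |x0| ≤ |xi| for all i. Then there exists a one-variable equation E' whose solution set is exactly {[ε], [x0⁻¹x1], ..., [x0⁻¹xm]} (each xi has x0 as a prefix, and x0⁻¹xi denotes removing that prefix). -/

import Mathlib

def subst {Γ : Type*} (x : List Γ) (U : List (Option Γ)) : List Γ :=
  U.flatMap fun c => c.elim x fun a => [a]

namespace QE
variable {Γ : Type*}

lemma subst_append (x : List Γ) (A B : List (Option Γ)) :
    subst x (A ++ B) = subst x A ++ subst x B := by
  simp [subst]

lemma subst_cons (x : List Γ) (c : Option Γ) (A : List (Option Γ)) :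
    subst x (c :: A) = (c.elim x fun a => [a]) ++ subst x A := by
  simp [subst]

lemma subst_const (x y : List Γ) {P : List (Option Γ)} (hP : ∀ c ∈ P, ∃ a, c = some a) :
    subst x P = subst y P := by
  induction P with
  | nil => rfl
  | cons c P ih =>
    obtain ⟨a, rfl⟩ := hP c (by simp)
    simp [subst_cons, ih fun c hc => hP c (by simp [hc])]

lemma split_none (L : List (Option Γ)) :
    (∀ c ∈ L, ∃ a, c = some a) ∨
    ∃ P N, L = P ++ none :: N ∧ ∀ c ∈ P, ∃ a, c = some a := by
  induction L with
  | nil => left; simp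
  | cons c L ih =>
    cases c with
    | none => exact Or.inr ⟨[], L, by simp⟩
    | some a =>
      rcases ih with h | ⟨P, N, rfl, hP⟩
      · left
        rintro c hc
        rcases List.mem_cons.mp hc with rfl | hc
        · exact ⟨a, rfl⟩
        · exact h c hc
      · refine Or.inr ⟨some a :: P, N, by simp, ?_⟩
        rintro c hc
        rcases List.mem_cons.mp hc with rfl | hc
        · exact ⟨a, rfl⟩
        · exact hP c hc

lemma prefix_of_prefix_append {a b c : List Γ} (h : a <+: b ++ c)
    (hl : a.length ≤ b.length) : a <+: b := by
  have h1 : a = (b ++ c).take a.length := List.prefix_iff_eq_take.mp h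
  rw [List.take_append_of_le_length hl] at h1
  exact h1 ▸ List.take_prefix _ _

def pw (p : List Γ) : ℕ → List Γ
  | 0 => []
  | k + 1 => p ++ pw p k

lemma pw_length (p : List Γ) (k : ℕ) : (pw p k).length = k * p.length := by
  induction k with
  | zero => simp [pw]
  | succ k ih => simp [pw, ih, Nat.succ_mul, Nat.add_comm]

lemma prefix_pw {p z : List Γ} (h : z <+: p ++ z) : ∀ k, z <+: pw p k ++ z := by
  intro k
  induction k with
  | zero => simp [pw]
  | succ k ih =>
    calc z <+: p ++ z := h
    _ <+: p ++ (pw p k ++ z) := (List.prefix_append_right_inj p).mpr ih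
    _ = pw p (k+1) ++ z := by simp [pw]

lemma pw_succ' (p : List Γ) (k : ℕ) : pw p (k+1) = pw p k ++ p := by
  induction k with
  | zero => simp [pw]
  | succ k ih =>
    show p ++ pw p (k+1) = (p ++ pw p k) ++ p
    rw [ih, List.append_assoc]

lemma pw_prefix_pw (p : List Γ) {k m : ℕ} (h : k ≤ m) : pw p k <+: pw p m := by
  induction m with
  | zero => simp_all [pw, Nat.le_zero.mp h]
  | succ m ih =>
    rcases Nat.lt_or_ge k (m+1) with h' | h'
    · calc pw p k <+: pw p m := ih (Nat.lt_succ_iff.mp h')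
      _ <+: pw p (m+1) := by rw [pw_succ']; exact List.prefix_append _ _
    · have : k = m + 1 := le_antisymm h h'
      exact this ▸ List.prefix_refl _

lemma comparable_of_selfprefix {p x y : List Γ} (hp : p ≠ [])
    (hx : x <+: p ++ x) (hy : y <+: p ++ y) (hlen : x.length ≤ y.length) :
    x <+: y := by
  have hp1 : 1 ≤ p.length := List.length_pos_iff.mpr hp
  set m := x.length + y.length with hm
  have hxm : x.length ≤ (pw p m).length := by
    rw [pw_length]
    calc x.length ≤ m := by omega
    _ = m * 1 := (Nat.mul_one m).symm
    _ ≤ m * p.length := Nat.mul_le_mul_left m hp1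
  have hym : y.length ≤ (pw p m).length := by
    rw [pw_length]
    calc y.length ≤ m := by omega
    _ = m * 1 := (Nat.mul_one m).symm
    _ ≤ m * p.length := Nat.mul_le_mul_left m hp1
  have hx' : x <+: pw p m := prefix_of_prefix_append (prefix_pw hx m) hxm
  have hy' : y <+: pw p m := prefix_of_prefix_append (prefix_pw hy m) hym
  rcases List.prefix_or_prefix_of_prefix hx' hy' with h | h
  · exact h
  · exact h.eq_of_length_le hlen ▸ List.prefix_refl _

lemma mismatch {a : Γ} {U₁ V₁ : List (Option Γ)} {x y : List Γ}
    (hx : x ++ subst x U₁ = a :: subst x V₁)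
    (hy : y ++ subst y U₁ = a :: subst y V₁)
    (hlen : x.length ≤ y.length) : x <+: y := by
  rcases split_none V₁ with h | ⟨P, N, rfl, hP⟩
  · have hc : subst x V₁ = subst y V₁ := subst_const x y h
    have hx' : x <+: a :: subst y V₁ := ⟨subst x U₁, by rw [← hc]; exact hx⟩
    have hy' : y <+: a :: subst y V₁ := ⟨subst y U₁, hy⟩
    rcases List.prefix_or_prefix_of_prefix hx' hy' with h' | h'
    · exact h'
    · exact h'.eq_of_length_le hlen ▸ List.prefix_refl _
  · set q := subst x P with hq
    have hqy : subst y P = q := subst_const y x hP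
    have hx2 : x <+: (a :: q) ++ x := by
      refine prefix_of_prefix_append (b := (a :: q) ++ x) (c := subst x N) ?_ (by simp; omega)
      refine ⟨subst x U₁, ?_⟩
      rw [hx, subst_append, subst_cons]
      simp
      exact hq.symm
    have hy2 : y <+: (a :: q) ++ y := by
      refine prefix_of_prefix_append (b := (a :: q) ++ y) (c := subst y N) ?_ (by simp; omega)
      refine ⟨subst y U₁, ?_⟩
      rw [hy, subst_append, subst_cons, hqy]
      simp
    exact comparable_of_selfprefix (by simp) hx2 hy2 hlen

lemma key : ∀ U V : List (Option Γ), U ≠ V →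
    ∀ x y : List Γ, subst x U = subst x V → subst y U = subst y V →
    x.length ≤ y.length → x <+: y := by
  intro U
  induction U with
  | nil =>
    intro V hne x y hx hy hlen
    match V with
    | [] => exact absurd rfl hne
    | some a :: V₁ => simp [subst, subst_cons] at hx
    | none :: V₁ =>
      rw [subst_cons] at hx
      have : x = [] := by
        have : ([] : List Γ) = x ++ subst x V₁ := hx
        exact List.append_eq_nil_iff.mp this.symm |>.1
      simp [this]
  | cons c U₁ ih =>
    intro V hne x y hx hy hlen
    match V with
    | [] =>
      cases c with
      | some a => simp [subst, subst_cons] at hx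
      | none =>
        rw [subst_cons] at hx
        have : x = [] := (List.append_eq_nil_iff.mp hx).1
        simp [this]
    | d :: V₁ =>
      rcases Classical.em (c = d) with rfl | hcd
      · have hne' : U₁ ≠ V₁ := fun h => hne (h ▸ rfl)
        rw [subst_cons, subst_cons] at hx hy
        exact ih V₁ hne' x y (List.append_cancel_left hx) (List.append_cancel_left hy) hlen
      · cases c with
        | none =>
          cases d with
          | none => exact absurd rfl hcd
          | some a =>
            rw [subst_cons, subst_cons] at hx hy
            simp only [Option.elim] at hx hy
            exact mismatch (by simpa using hx) (by simpa using hy) hlen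
        | some a =>
          cases d with
          | none =>
            rw [subst_cons, subst_cons] at hx hy
            simp only [Option.elim] at hx hy
            exact mismatch (a := a) (by simpa using hx.symm) (by simpa using hy.symm) hlen
          | some b =>
            rw [subst_cons, subst_cons] at hx
            simp only [Option.elim] at hx
            have : a = b := by simpa using congrArg (·.head?) hx
            exact absurd (this ▸ rfl) hcd

def lift (x₀ : List Γ) (U : List (Option Γ)) : List (Option Γ) :=
  U.flatMap fun c => c.elim (x₀.map some ++ [none]) fun a => [some a]

lemma subst_lift (x₀ x : List Γ) (U : List (Option Γ)) :
    subst x (lift x₀ U) = subst (x₀ ++ x) U := by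
  induction U with
  | nil => rfl
  | cons c U ih =>
    cases c with
    | none =>
      show subst x ((x₀.map some ++ [none]) ++ lift x₀ U) = _
      rw [subst_append, subst_cons, ih]
      simp [subst, List.flatMap_map]
    | some a =>
      show subst x ([some a] ++ lift x₀ U) = _
      rw [subst_append, subst_cons, ih]
      rfl

lemma empty_type_list (h : ¬ Nonempty Γ) (x : List Γ) : x = [] := by
  cases x with
  | nil => rfl
  | cons a _ => exact absurd ⟨a⟩ h

end QE

theorem quotient_equation {Γ : Type*} (U V : List (Option Γ))
    (xs : List (List Γ))
    (hsol : ∀ x : List Γ, subst x U = subst x V ↔ x ∈ xs)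
    (x₀ : List Γ) (hx₀ : x₀ ∈ xs) (hmin : ∀ x ∈ xs, x₀.length ≤ x.length) :
    (∀ x ∈ xs, x₀ <+: x) ∧
    ∃ U' V' : List (Option Γ),
      {x : List Γ | subst x U' = subst x V'} = {x : List Γ | x₀ ++ x ∈ xs} := by
  constructor
  · intro x hx
    rcases Classical.em (U = V) with rfl | hne
    · -- every word is a solution; Γ must be empty else xs infinite
      by_cases hΓ : Nonempty Γ
      · exfalso
        obtain ⟨a⟩ := hΓ
        have hinj : Function.Injective (fun n => List.replicate n a) := by
          intro m n h
          simpa using congrArg List.length h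
        have hsub : Set.range (fun n => List.replicate n a) ⊆ {z : List Γ | z ∈ xs} := by
          rintro z ⟨n, rfl⟩
          exact (hsol _).mp rfl
        exact Set.infinite_range_of_injective hinj ((List.finite_toSet xs).subset hsub)
      · rw [QE.empty_type_list hΓ x₀]
        exact List.nil_prefix
    · exact QE.key U V hne x₀ x ((hsol x₀).mpr hx₀) ((hsol x).mpr hx) (hmin x hx)
  · refine ⟨QE.lift x₀ U, QE.lift x₀ V, ?_⟩
    ext z
    simp only [Set.mem_setOf_eq, QE.subst_lift, hsol]
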